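/- arXiv:1610.08035 — 3 statements merged into one kernel-verified Lean document; each statement's English description precedes it below -/
import Mathlib

section
/- Theorem 1 (block-tridiagonality of the precision matrix): Let N, b be natural numbers, M_1, …, M_N be b×b real matrices, and let P_0, Q_1, …, Q_N be invertible b×b real matrices. Let 𝐀 be the (N+1)×(N+1) block lower-triangular matrix with 𝐀_{ii} = I, 𝐀_{ij} = M_i M_{i−1} ⋯ M_{j+1} for i > j, 𝐀_{ij} = 0 for i < j, and let 𝐐 be the block-diagonal matrix with diagonal blocks P_0, Q_1, …, Q_N. Then 𝒦 = 𝐀 𝐐 𝐀ᵀ is invertible and its inverse is block-tridiagonal: for all block indices i, j ∈ {0,…,N} with |i − j| ≥ 2, the (i,j) block of 𝒦⁻¹ is the zero b×b matrix. -/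
open Matrix

noncomputable section

/-- The ordered product `M i * M (i-1) * ⋯ * M (j+1)` (the identity when `i ≤ j`). -/
def chainProd {b : ℕ} (M : ℕ → Matrix (Fin b) (Fin b) ℝ) (i j : ℕ) :
    Matrix (Fin b) (Fin b) ℝ :=
  ((List.range (i - j)).map fun k => M (i - k)).prod

/-- Assemble an `(N+1) × (N+1)` array of `b × b` blocks into one big matrix. -/
def blockToMatrix (N b : ℕ)
    (blk : Fin (N + 1) → Fin (N + 1) → Matrix (Fin b) (Fin b) ℝ) :
    Matrix (Fin (N + 1) × Fin b) (Fin (N + 1) × Fin b) ℝ :=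
  fun p q => blk p.1 q.1 p.2 q.2

/-- The block lower-triangular matrix `𝐀`. -/
def Abig (N b : ℕ) (M : ℕ → Matrix (Fin b) (Fin b) ℝ) :
    Matrix (Fin (N + 1) × Fin b) (Fin (N + 1) × Fin b) ℝ :=
  blockToMatrix N b fun i j =>
    if (i : ℕ) < (j : ℕ) then 0 else chainProd M i j

/-- The block-diagonal matrix with diagonal blocks `D 0, D 1, …, D N`. -/
def blockDiag (N b : ℕ) (D : Fin (N + 1) → Matrix (Fin b) (Fin b) ℝ) :
    Matrix (Fin (N + 1) × Fin b) (Fin (N + 1) × Fin b) ℝ :=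
  blockToMatrix N b fun i j => if i = j then D i else 0

/-! ### Auxiliary lemmas -/

lemma blockDiag_def (N b : ℕ) (D : Fin (N + 1) → Matrix (Fin b) (Fin b) ℝ) :
    _root_.blockDiag N b D
      = blockToMatrix N b (fun i j => if i = j then D i else 0) := rfl

lemma chainProd_self {b : ℕ} (M : ℕ → Matrix (Fin b) (Fin b) ℝ) (i : ℕ) :
    chainProd M i i = 1 := by
  simp [chainProd]

lemma chainProd_succ {b : ℕ} (M : ℕ → Matrix (Fin b) (Fin b) ℝ) (i j : ℕ) (h : j < i) :
    chainProd M i j = chainProd M i (j + 1) * M (j + 1) := by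
  unfold chainProd
  have h1 : i - j = (i - (j + 1)) + 1 := by omega
  rw [h1, List.range_succ, List.map_append, List.prod_append]
  simp only [List.map_cons, List.map_nil, List.prod_cons, List.prod_nil, mul_one]
  rw [show i - (i - (j + 1)) = j + 1 from by omega]

/-- The candidate inverse blocks of `𝐀` : identity on the diagonal and `-Mᵢ` just below. -/
def Bblk {b : ℕ} (N : ℕ) (M : ℕ → Matrix (Fin b) (Fin b) ℝ) :
    Fin (N + 1) → Fin (N + 1) → Matrix (Fin b) (Fin b) ℝ :=
  fun i j => (if (i : ℕ) = (j : ℕ) then 1 else 0) +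
    (if (i : ℕ) = (j : ℕ) + 1 then -(M (i : ℕ)) else 0)

lemma blockToMatrix_mul (N b : ℕ)
    (f g : Fin (N + 1) → Fin (N + 1) → Matrix (Fin b) (Fin b) ℝ) :
    blockToMatrix N b f * blockToMatrix N b g
      = blockToMatrix N b (fun i j => ∑ p, f i p * g p j) := by
  ext ⟨i, k⟩ ⟨j, l⟩
  simp [blockToMatrix, Matrix.mul_apply, Fintype.sum_prod_type, Matrix.sum_apply]

lemma blockToMatrix_one (N b : ℕ) :
    blockToMatrix N b (fun i j => if i = j then 1 else 0) = 1 := by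
  ext ⟨i, k⟩ ⟨j, l⟩
  by_cases h : i = j
  · subst h
    simp [blockToMatrix, Matrix.one_apply, Prod.ext_iff]
  · simp [blockToMatrix, Matrix.one_apply, Prod.ext_iff, h]

lemma blockToMatrix_transpose (N b : ℕ)
    (f : Fin (N + 1) → Fin (N + 1) → Matrix (Fin b) (Fin b) ℝ) :
    (blockToMatrix N b f)ᵀ = blockToMatrix N b (fun i j => (f j i)ᵀ) := rfl

lemma A_mul_B (N b : ℕ) (M : ℕ → Matrix (Fin b) (Fin b) ℝ) :
    Abig N b M * blockToMatrix N b (Bblk N M) = 1 := by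
  rw [Abig, blockToMatrix_mul, ← blockToMatrix_one N b]
  refine congrArg (blockToMatrix N b) ?_
  funext i j
  rcases lt_trichotomy (i : ℕ) (j : ℕ) with hij | hij | hij
  · have hij' : i ≠ j := fun h => by simp [h] at hij
    rw [if_neg hij']
    apply Finset.sum_eq_zero
    intro p _
    by_cases h1 : (i : ℕ) < (p : ℕ)
    · simp [h1]
    · have h3 : ¬((p : ℕ) = (j : ℕ)) := by omega
      have h4 : ¬((p : ℕ) = (j : ℕ) + 1) := by omega
      simp [Bblk, h3, h4]
  · have hij' : i = j := Fin.ext hij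
    subst hij'
    rw [if_pos rfl, Fintype.sum_eq_single i]
    · simp [Bblk, chainProd_self]
    · intro p hp
      by_cases h1 : (i : ℕ) < (p : ℕ)
      · simp [h1]
      · have hpi : (p : ℕ) ≠ (i : ℕ) := fun h => hp (Fin.ext h)
        have h3 : ¬((p : ℕ) = (i : ℕ)) := hpi
        have h4 : ¬((p : ℕ) = (i : ℕ) + 1) := by omega
        simp [Bblk, h3, h4]
  · have hij' : i ≠ j := fun h => by simp [h] at hij
    rw [if_neg hij']
    have hjN : (j : ℕ) < N := by have := i.isLt; omega
    set j' : Fin (N + 1) := ⟨(j : ℕ) + 1, by omega⟩ with hj'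
    have hsplit : ∀ p : Fin (N + 1),
        (if (i : ℕ) < (p : ℕ) then 0 else chainProd M i p) * Bblk N M p j
          = (if (i : ℕ) < (p : ℕ) then 0 else chainProd M i p) *
              (if (p : ℕ) = (j : ℕ) then 1 else 0)
            + (if (i : ℕ) < (p : ℕ) then 0 else chainProd M i p) *
              (if (p : ℕ) = (j : ℕ) + 1 then -(M (p : ℕ)) else 0) := by
      intro p; rw [Bblk, mul_add]
    rw [Finset.sum_congr rfl (fun p _ => hsplit p), Finset.sum_add_distrib]
    have hS1 : (∑ p : Fin (N + 1), (if (i : ℕ) < (p : ℕ) then 0 else chainProd M i p) *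
        (if (p : ℕ) = (j : ℕ) then 1 else 0)) = chainProd M i j := by
      rw [Fintype.sum_eq_single j]
      · have : ¬ ((i : ℕ) < (j : ℕ)) := by omega
        simp [this]
      · intro p hp
        have h3 : ¬((p : ℕ) = (j : ℕ)) := fun h => hp (Fin.ext h)
        simp [h3]
    have hS2 : (∑ p : Fin (N + 1), (if (i : ℕ) < (p : ℕ) then 0 else chainProd M i p) *
        (if (p : ℕ) = (j : ℕ) + 1 then -(M (p : ℕ)) else 0))
          = -(chainProd M i ((j : ℕ) + 1) * M ((j : ℕ) + 1)) := by
      rw [Fintype.sum_eq_single j']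
      · have h1 : ¬ ((i : ℕ) < (j' : ℕ)) := by simp [hj']; omega
        have h2 : (j' : ℕ) = (j : ℕ) + 1 := rfl
        rw [if_neg h1, if_pos h2, h2, mul_neg]
      · intro p hp
        have h3 : ¬((p : ℕ) = (j : ℕ) + 1) := by
          intro h
          apply hp
          apply Fin.ext
          simp [hj', h]
        simp [h3]
    rw [hS1, hS2, chainProd_succ M (i : ℕ) (j : ℕ) hij, add_neg_cancel]

lemma Q_mul_Qinv (N b : ℕ) (Q : Fin (N + 1) → Matrix (Fin b) (Fin b) ℝ)
    (hQ : ∀ i, IsUnit (Q i).det) :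
    blockDiag N b Q * blockDiag N b (fun i => (Q i)⁻¹) = 1 := by
  rw [blockDiag_def, blockDiag_def, blockToMatrix_mul, ← blockToMatrix_one N b]
  refine congrArg (blockToMatrix N b) ?_
  funext i j
  rw [Fintype.sum_eq_single i]
  · by_cases h : i = j
    · subst h
      simp [Matrix.mul_nonsing_inv _ (hQ i)]
    · simp [h]
  · intro p hp
    rw [if_neg (fun h => hp h.symm), zero_mul]

lemma tridiag_sum_eq_zero (N b : ℕ) (M : ℕ → Matrix (Fin b) (Fin b) ℝ)
    (Qi : Fin (N + 1) → Matrix (Fin b) (Fin b) ℝ) (i j : Fin (N + 1))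
    (h : (i : ℕ) + 2 ≤ (j : ℕ) ∨ (j : ℕ) + 2 ≤ (i : ℕ)) :
    (∑ p, (Bblk N M p i)ᵀ * ∑ q, (if p = q then Qi p else 0) * Bblk N M q j) = 0 := by
  apply Finset.sum_eq_zero
  intro p _
  have hinner : (∑ q, (if p = q then Qi p else 0) * Bblk N M q j)
      = Qi p * Bblk N M p j := by
    rw [Fintype.sum_eq_single p]
    · rw [if_pos rfl]
    · intro q hq
      rw [if_neg (fun h => hq h.symm), zero_mul]
  rw [hinner]
  by_cases h1 : (p : ℕ) = (i : ℕ) ∨ (p : ℕ) = (i : ℕ) + 1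
  · have h3 : ¬((p : ℕ) = (j : ℕ)) := by
      rcases h1 with h1 | h1 <;> rcases h with h | h <;> omega
    have h4 : ¬((p : ℕ) = (j : ℕ) + 1) := by
      rcases h1 with h1 | h1 <;> rcases h with h | h <;> omega
    have hz : Bblk N M p j = 0 := by simp [Bblk, h3, h4]
    rw [hz, mul_zero, mul_zero]
  · push_neg at h1
    have hz : Bblk N M p i = 0 := by simp [Bblk, h1.1, h1.2]
    rw [hz, Matrix.transpose_zero, zero_mul]

/-- Theorem 1 of the paper: `𝒦 = 𝐀 𝐐 𝐀ᵀ` is invertible and its inverse is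
block-tridiagonal: every `(i,j)` block with `|i - j| ≥ 2` vanishes. -/
theorem SpInGP_inverse_blockTridiagonal (N b : ℕ)
    (M : ℕ → Matrix (Fin b) (Fin b) ℝ)
    (Q : Fin (N + 1) → Matrix (Fin b) (Fin b) ℝ)
    (hQ : ∀ i, IsUnit (Q i).det) :
    IsUnit (Abig N b M * blockDiag N b Q * (Abig N b M)ᵀ) ∧
      ∀ i j : Fin (N + 1), ((i : ℕ) + 2 ≤ (j : ℕ) ∨ (j : ℕ) + 2 ≤ (i : ℕ)) →
        ∀ k l : Fin b,
          (Abig N b M * blockDiag N b Q * (Abig N b M)ᵀ)⁻¹ (i, k) (j, l) = 0 := by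
  have hAB : Abig N b M * blockToMatrix N b (Bblk N M) = 1 := A_mul_B N b M
  have hQQ : blockDiag N b Q * blockDiag N b (fun i => (Q i)⁻¹) = 1 := Q_mul_Qinv N b Q hQ
  have hdetA : IsUnit (Abig N b M).det := by
    have := congrArg Matrix.det hAB
    rw [Matrix.det_mul, Matrix.det_one] at this
    exact IsUnit.of_mul_eq_one _ this
  have hdetQ : IsUnit (blockDiag N b Q).det := by
    have := congrArg Matrix.det hQQ
    rw [Matrix.det_mul, Matrix.det_one] at this
    exact IsUnit.of_mul_eq_one _ this
  have hUnit : IsUnit (Abig N b M * blockDiag N b Q * (Abig N b M)ᵀ) := by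
    rw [Matrix.isUnit_iff_isUnit_det, Matrix.det_mul, Matrix.det_mul, Matrix.det_transpose]
    exact (hdetA.mul hdetQ).mul hdetA
  refine ⟨hUnit, ?_⟩
  have hAinv : (Abig N b M)⁻¹ = blockToMatrix N b (Bblk N M) :=
    Matrix.inv_eq_right_inv hAB
  have hQinv : (blockDiag N b Q)⁻¹ = blockDiag N b (fun i => (Q i)⁻¹) :=
    Matrix.inv_eq_right_inv hQQ
  have hK : (Abig N b M * blockDiag N b Q * (Abig N b M)ᵀ)⁻¹
      = (blockToMatrix N b (Bblk N M))ᵀ *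
          (blockDiag N b (fun i => (Q i)⁻¹) * blockToMatrix N b (Bblk N M)) := by
    rw [Matrix.mul_inv_rev, Matrix.mul_inv_rev, ← Matrix.transpose_nonsing_inv,
      hAinv, hQinv]
  intro i j hgap k l
  rw [hK, blockToMatrix_transpose, blockDiag_def, blockToMatrix_mul, blockToMatrix_mul]
  show (∑ p, (Bblk N M p i)ᵀ * ∑ q, (if p = q then (Q p)⁻¹ else 0) * Bblk N M q j) k l = 0
  rw [tridiag_sum_eq_zero N b M (fun p => (Q p)⁻¹) i j hgap]
  simp
end
end

section
/- Correctness of the Matérn(3/2) state-space representation: Let ℓ > 0, φ = √3/ℓ, F the 2×2 real matrix with rows (0, 1) and (−φ², −2φ), and P₀ the 2×2 diagonal matrix with diagonal entries 1 and 3/ℓ². Then for every t ≥ 0, the (0,0) entry of exp(tF) · P₀ equals (1 + φt) e^{−φt}; equivalently, with H = [1, 0], H exp(tF) P₀ Hᵀ equals the Matérn(ν = 3/2) covariance k(t) = (1 + √3 t/ℓ) exp(−√3 t/ℓ). -/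
open Matrix

noncomputable section

lemma mat_exp_of_sq_zero (x : Matrix (Fin 2) (Fin 2) ℝ) (hx : x ^ 2 = 0) :
    NormedSpace.exp x = 1 + x := by
  letI : SeminormedRing (Matrix (Fin 2) (Fin 2) ℝ) := Matrix.linftyOpSemiNormedRing
  letI : NormedRing (Matrix (Fin 2) (Fin 2) ℝ) := Matrix.linftyOpNormedRing
  letI : NormedAlgebra ℝ (Matrix (Fin 2) (Fin 2) ℝ) := Matrix.linftyOpNormedAlgebra
  rw [NormedSpace.exp_eq_tsum ℝ]
  have h : ∀ n : ℕ, n ∉ ({0, 1} : Finset ℕ) →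
      ((n.factorial : ℝ))⁻¹ • x ^ n = 0 := by
    intro n hn
    have h2 : 2 ≤ n := by
      rcases n with _ | _ | n
      · simp at hn
      · simp at hn
      · omega
    have : x ^ n = x ^ 2 * x ^ (n - 2) := by rw [← pow_add]; congr 1; omega
    rw [this, hx, zero_mul, smul_zero]
  dsimp only
  rw [tsum_eq_sum h]
  simp [Finset.sum_pair (by norm_num : (0:ℕ) ≠ 1)]

lemma mat_exp_smul_one (c : ℝ) :
    NormedSpace.exp (c • (1 : Matrix (Fin 2) (Fin 2) ℝ)) =
      Real.exp c • (1 : Matrix (Fin 2) (Fin 2) ℝ) := by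
  letI : SeminormedRing (Matrix (Fin 2) (Fin 2) ℝ) := Matrix.linftyOpSemiNormedRing
  letI : NormedRing (Matrix (Fin 2) (Fin 2) ℝ) := Matrix.linftyOpNormedRing
  letI : NormedAlgebra ℝ (Matrix (Fin 2) (Fin 2) ℝ) := Matrix.linftyOpNormedAlgebra
  rw [← Algebra.algebraMap_eq_smul_one]
  have := NormedSpace.algebraMap_exp_comm (𝕂 := ℝ) (𝔸 := Matrix (Fin 2) (Fin 2) ℝ) c
  convert this.symm using 1
  · rw [Algebra.algebraMap_eq_smul_one]
    rfl
  · rw [Algebra.algebraMap_eq_smul_one, Real.exp_eq_exp_ℝ]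

lemma exp_split (φ t : ℝ) :
    NormedSpace.exp (t • !![(0 : ℝ), 1; -φ ^ 2, -(2 * φ)]) =
      Real.exp (-(φ * t)) • (1 + t • !![φ, 1; -φ ^ 2, -φ]) := by
  have hsplit : t • !![(0 : ℝ), 1; -φ ^ 2, -(2 * φ)] =
      (-(φ * t)) • (1 : Matrix (Fin 2) (Fin 2) ℝ) + t • !![φ, 1; -φ ^ 2, -φ] := by
    ext i j
    fin_cases i <;> fin_cases j <;> simp [Matrix.one_apply] <;> ring
  have hc : Commute ((-(φ * t)) • (1 : Matrix (Fin 2) (Fin 2) ℝ))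
      (t • !![φ, 1; -φ ^ 2, -φ]) :=
    ((Commute.one_left _).smul_left _).smul_right _
  rw [hsplit, Matrix.exp_add_of_commute _ _ hc, mat_exp_smul_one]
  have h2 : NormedSpace.exp (t • !![φ, 1; -φ ^ 2, -φ]) =
      1 + t • !![φ, 1; -φ ^ 2, -φ] := by
    apply mat_exp_of_sq_zero
    rw [smul_pow]
    convert smul_zero (t ^ 2)
    ext i j
    fin_cases i <;> fin_cases j <;>
      simp [pow_two, Matrix.mul_apply, Fin.sum_univ_two] <;> ring
  rw [h2, smul_mul_assoc, one_mul]

/-- Correctness of the Matérn(3/2) state-space representation: with `φ = √3/ℓ`,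
drift matrix `F = !![0, 1; −φ², −2φ]`, stationary covariance
`P₀ = !![1, 0; 0, 3/ℓ²]` and measurement matrix `H = !![1, 0]`, for every
`t ≥ 0` the `(0,0)` entry of `exp(tF) · P₀` equals `(1 + φt) e^{−φt}`;
equivalently `H exp(tF) P₀ Hᵀ = (1 + √3 t/ℓ) exp(−√3 t/ℓ)`. -/
theorem matern32_state_space_correct (ℓ φ : ℝ) (hℓ : 0 < ℓ)
    (hφ : φ = Real.sqrt 3 / ℓ) (t : ℝ) (ht : 0 ≤ t) :
    (NormedSpace.exp (t • !![(0 : ℝ), 1; -φ ^ 2, -(2 * φ)]) *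
        !![(1 : ℝ), 0; 0, 3 / ℓ ^ 2]) 0 0 =
      (1 + φ * t) * Real.exp (-(φ * t)) ∧
    (!![(1 : ℝ), 0] *
        NormedSpace.exp (t • !![(0 : ℝ), 1; -φ ^ 2, -(2 * φ)]) *
        !![(1 : ℝ), 0; 0, 3 / ℓ ^ 2] * (!![(1 : ℝ), 0])ᵀ) 0 0 =
      (1 + Real.sqrt 3 * t / ℓ) * Real.exp (-(Real.sqrt 3 * t / ℓ)) := by
  subst hφ
  have e : Real.sqrt 3 * t / ℓ = Real.sqrt 3 / ℓ * t := by ring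
  rw [exp_split, e]
  constructor <;>
    · simp only [Matrix.mul_apply, Fin.sum_univ_two, Matrix.transpose_apply,
        Matrix.smul_apply, Matrix.add_apply, Matrix.one_apply, smul_eq_mul]
      norm_num
      ring
end
end

section
/- Positive semidefiniteness of the Matérn(3/2) process-noise covariance: Let ℓ > 0, φ = √3/ℓ, F the 2×2 real matrix with rows (0, 1) and (−φ², −2φ), and P₀ the 2×2 diagonal matrix with diagonal entries 1 and 3/ℓ². Then for every t ≥ 0, the matrix Q(t) = P₀ − exp(tF) · P₀ · exp(tF)ᵀ is symmetric positive semidefinite. -/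
open Matrix

noncomputable section

lemma exp_sq_zero (M : Matrix (Fin 2) (Fin 2) ℝ) (h : M * M = 0) :
    NormedSpace.exp M = 1 + M := by
  have hpow : ∀ n, 2 ≤ n → M ^ n = 0 := by
    intro n hn
    obtain ⟨k, rfl⟩ := Nat.exists_eq_add_of_le hn
    rw [pow_add, pow_two, h, zero_mul]
  rw [NormedSpace.exp_eq_tsum (𝕂 := ℝ)]
  show (∑' n : ℕ, ((n.factorial : ℝ))⁻¹ • M ^ n) = 1 + M
  rw [tsum_eq_sum (s := {0, 1}) (by
    intro n hn
    simp only [Finset.mem_insert, Finset.mem_singleton] at hn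
    push_neg at hn
    rw [hpow n (by omega), smul_zero])]
  simp [Finset.sum_pair (by norm_num : (0:ℕ) ≠ 1)]

lemma exp_smul_one' (c : ℝ) :
    NormedSpace.exp (c • (1 : Matrix (Fin 2) (Fin 2) ℝ)) = Real.exp c • 1 := by
  have h : c • (1 : Matrix (Fin 2) (Fin 2) ℝ) = Matrix.diagonal (fun _ => c) := by
    ext i j
    by_cases hij : i = j <;> simp [hij, Matrix.one_apply, Matrix.diagonal]
  rw [h, Matrix.exp_diagonal]
  ext i j
  by_cases hij : i = j <;>
    simp [hij, Matrix.diagonal, Matrix.one_apply, Real.exp_eq_exp_ℝ]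

lemma exp_tF (t φ : ℝ) :
    NormedSpace.exp (t • !![(0 : ℝ), 1; -φ ^ 2, -(2 * φ)]) =
      !![Real.exp (-(t * φ)) * (1 + t * φ), Real.exp (-(t * φ)) * t;
         -(Real.exp (-(t * φ)) * (t * φ ^ 2)), Real.exp (-(t * φ)) * (1 - t * φ)] := by
  have hsplit : t • !![(0 : ℝ), 1; -φ ^ 2, -(2 * φ)] =
      (-(t * φ)) • (1 : Matrix (Fin 2) (Fin 2) ℝ) +
        !![t * φ, t; -(t * φ ^ 2), -(t * φ)] := by
    ext i j
    fin_cases i <;> fin_cases j <;> simp [Matrix.one_apply] <;> ring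
  have hN : !![t * φ, t; -(t * φ ^ 2), -(t * φ)] * !![t * φ, t; -(t * φ ^ 2), -(t * φ)] = 0 := by
    ext i j
    fin_cases i <;> fin_cases j <;>
      simp [Matrix.mul_apply, Fin.sum_univ_two] <;> ring
  have hcomm : Commute ((-(t * φ)) • (1 : Matrix (Fin 2) (Fin 2) ℝ))
      !![t * φ, t; -(t * φ ^ 2), -(t * φ)] :=
    (Commute.one_left _).smul_left _
  calc NormedSpace.exp (t • !![(0 : ℝ), 1; -φ ^ 2, -(2 * φ)])
      = NormedSpace.exp ((-(t * φ)) • (1 : Matrix (Fin 2) (Fin 2) ℝ) +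
          !![t * φ, t; -(t * φ ^ 2), -(t * φ)]) := by rw [hsplit]
    _ = NormedSpace.exp ((-(t * φ)) • (1 : Matrix (Fin 2) (Fin 2) ℝ)) *
          NormedSpace.exp !![t * φ, t; -(t * φ ^ 2), -(t * φ)] :=
        Matrix.exp_add_of_commute _ _ hcomm
    _ = (Real.exp (-(t * φ)) • (1 : Matrix (Fin 2) (Fin 2) ℝ)) *
          (1 + !![t * φ, t; -(t * φ ^ 2), -(t * φ)]) := by
        rw [exp_smul_one', exp_sq_zero _ hN]
    _ = _ := by
        ext i j
        fin_cases i <;> fin_cases j <;>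
          simp [Matrix.mul_apply, Fin.sum_univ_two, Matrix.one_apply] <;> ring

lemma psd_quad (a b c x y : ℝ) (ha : 0 ≤ a) (hc : 0 ≤ c) (hd : b ^ 2 ≤ a * c) :
    0 ≤ a * x ^ 2 + 2 * b * x * y + c * y ^ 2 := by
  rcases eq_or_lt_of_le ha with h | h
  · have hb : b = 0 := by nlinarith
    subst hb
    nlinarith [mul_nonneg hc (sq_nonneg y)]
  · nlinarith [sq_nonneg (a * x + b * y), mul_nonneg (sub_nonneg.2 hd) (sq_nonneg y)]

lemma key_ineqs (s : ℝ) (hs : 0 ≤ s) :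
    Real.exp (-s) ^ 2 * (1 + 2 * s + 2 * s ^ 2) ≤ 1 ∧
    4 * s ^ 2 * Real.exp (-s) ^ 2 ≤ (1 - Real.exp (-s) ^ 2) ^ 2 := by
  have hEe : Real.exp s * Real.exp (-s) = 1 := by rw [← Real.exp_add]; simp
  have hepos : (0 : ℝ) < Real.exp (-s) := Real.exp_pos _
  have hE1 : 1 + s ≤ Real.exp s := by have := Real.add_one_le_exp s; linarith
  have hsinh : 2 * s ≤ Real.exp s - Real.exp (-s) := by
    rcases eq_or_lt_of_le hs with h | h
    · simp [← h]
    · have := (Real.self_lt_sinh_iff).2 h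
      rw [Real.sinh_eq] at this
      linarith
  have h1 : 2 * s * Real.exp (-s) ≤ 1 - Real.exp (-s) ^ 2 := by nlinarith
  have h2 : Real.exp (-s) ^ 2 * (1 + s) ≤ Real.exp (-s) := by nlinarith
  constructor
  · nlinarith [mul_nonneg (mul_nonneg (by linarith : (0:ℝ) ≤ 2 * s) hepos.le) hs]
  · have h0 : 0 ≤ 2 * s * Real.exp (-s) := by positivity
    have h3 := mul_self_le_mul_self h0 h1
    nlinarith [h3]

/-- Positive semidefiniteness of the Matérn(3/2) process-noise covariance:
with `φ = √3/ℓ`, drift matrix `F = !![0, 1; −φ², −2φ]` and stationary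
covariance `P₀ = !![1, 0; 0, 3/ℓ²]`, for every `t ≥ 0` the matrix
`Q(t) = P₀ − exp(tF) P₀ exp(tF)ᵀ` is symmetric positive semidefinite. -/
theorem matern32_process_noise_posSemidef (ℓ φ : ℝ) (hℓ : 0 < ℓ)
    (hφ : φ = Real.sqrt 3 / ℓ) (t : ℝ) (ht : 0 ≤ t) :
    (!![(1 : ℝ), 0; 0, 3 / ℓ ^ 2] -
        NormedSpace.exp (t • !![(0 : ℝ), 1; -φ ^ 2, -(2 * φ)]) *
          !![(1 : ℝ), 0; 0, 3 / ℓ ^ 2] *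
          (NormedSpace.exp (t • !![(0 : ℝ), 1; -φ ^ 2, -(2 * φ)]))ᵀ).PosSemidef := by
  have hφpos : 0 ≤ φ := by rw [hφ]; positivity
  have hφ2 : φ ^ 2 = 3 / ℓ ^ 2 := by
    rw [hφ, div_pow, Real.sq_sqrt (by norm_num : (0:ℝ) ≤ 3)]
  have hs : 0 ≤ t * φ := mul_nonneg ht hφpos
  obtain ⟨k1, k2⟩ := key_ineqs (t * φ) hs
  have hepos : (0 : ℝ) < Real.exp (-(t * φ)) := Real.exp_pos _
  -- abbreviations for the entries of Q
  set A := 1 - Real.exp (-(t * φ)) ^ 2 * (1 + 2 * (t * φ) + 2 * (t * φ) ^ 2) with hA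
  set B := 2 * Real.exp (-(t * φ)) ^ 2 * (t * φ) ^ 2 * φ with hB
  set C := φ ^ 2 * (1 - Real.exp (-(t * φ)) ^ 2 * (1 - 2 * (t * φ) + 2 * (t * φ) ^ 2)) with hC
  have hA0 : 0 ≤ A := by rw [hA]; linarith
  have hCfac : 0 ≤ 1 - Real.exp (-(t * φ)) ^ 2 * (1 - 2 * (t * φ) + 2 * (t * φ) ^ 2) := by
    nlinarith [mul_nonneg (mul_nonneg hs hs) (sq_nonneg (Real.exp (-(t * φ))))]
  have hC0 : 0 ≤ C := by rw [hC]; exact mul_nonneg (sq_nonneg φ) hCfac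
  have hdet : B ^ 2 ≤ A * C := by
    rw [hA, hB, hC]
    nlinarith [mul_nonneg (sq_nonneg φ)
      (by linarith : (0:ℝ) ≤ (1 - Real.exp (-(t * φ)) ^ 2) ^ 2
        - 4 * (t * φ) ^ 2 * Real.exp (-(t * φ)) ^ 2)]
  have hQ : (!![(1 : ℝ), 0; 0, 3 / ℓ ^ 2] -
        NormedSpace.exp (t • !![(0 : ℝ), 1; -φ ^ 2, -(2 * φ)]) *
          !![(1 : ℝ), 0; 0, 3 / ℓ ^ 2] *
          (NormedSpace.exp (t • !![(0 : ℝ), 1; -φ ^ 2, -(2 * φ)]))ᵀ) = !![A, B; B, C] := by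
    have htr : ∀ a b c d : ℝ, (!![a, b; c, d])ᵀ = !![a, c; b, d] := by
      intros a b c d
      ext i j
      fin_cases i <;> fin_cases j <;> simp
    rw [exp_tF, ← hφ2, htr, hA, hB, hC]
    ext i j
    fin_cases i <;> fin_cases j <;>
      simp [Matrix.mul_apply, Fin.sum_univ_two, Matrix.sub_apply] <;>
      ring
  rw [hQ]
  rw [posSemidef_iff_dotProduct_mulVec]
  constructor
  · ext i j
    fin_cases i <;> fin_cases j <;> simp [Matrix.conjTranspose_apply]
  · intro x
    have h := psd_quad A B C (x 0) (x 1) hA0 hC0 hdet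
    have hq : star x ⬝ᵥ (!![A, B; B, C] *ᵥ x) =
        A * (x 0) ^ 2 + 2 * B * (x 0) * (x 1) + C * (x 1) ^ 2 := by
      simp [Matrix.mulVec, dotProduct, Fin.sum_univ_two]
      ring
    rw [hq]
    exact h
end
end
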